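/- Every simple level-1 network on X is fully tree-based: every subtree of a simple level-1 network whose leaf set is X is a spanning tree. -/

import Mathlib

open SimpleGraph

/-- Degree of a vertex (as the cardinality of its neighbour set). -/
noncomputable def deg {W : Type*} (G : SimpleGraph W) (v : W) : ℕ :=
  (G.neighborSet v).ncard

/-- `T` is a support-tree for `G` with leaf set `X`: a spanning tree of `G`
whose leaves (vertices of degree at most 1) are exactly `X`. -/
def IsSupportTree {W : Type*} (G T : SimpleGraph W) (X : Set W) : Prop :=
  T ≤ G ∧ T.IsTree ∧ {v | deg T v ≤ 1} = X

/-- A graph is tree-based on `X` if it has a support-tree with leaf set `X`. -/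
def TreeBased {W : Type*} (G : SimpleGraph W) (X : Set W) : Prop :=
  ∃ T, IsSupportTree G T X

/-- An unrooted phylogenetic network on `X`: a connected graph all of whose
vertices have degree 1 or 3 (allowing the single-vertex convention via `≤ 1`),
whose leaves are exactly `X`. -/
def IsNetwork {W : Type*} (G : SimpleGraph W) (X : Set W) : Prop :=
  G.Connected ∧ (∀ v, deg G v ≤ 1 ∨ deg G v = 3) ∧ {v | deg G v ≤ 1} = X

/-- The old Mathlib (Dec 2024) meaning of `SimpleGraph.IsBridge`: `e` is an edge of `G`
and its endpoints are not reachable from one another once `e` is removed. -/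
def IsBridgeOld {W : Type*} (G : SimpleGraph W) (e : Sym2 W) : Prop :=
  e ∈ G.edgeSet ∧
    Sym2.lift ⟨fun v w => ¬(G \ fromEdgeSet {e}).Reachable v w, by simp [reachable_comm]⟩ e

/-- The cut-edge `{u,v}` induces a split of `X`: each side of the deleted edge
contains an element of `X`. -/
def InducesSplit {W : Type*} (G : SimpleGraph W) (X : Set W) (u v : W) : Prop :=
  (∃ a ∈ X, (G.deleteEdges {s(u, v)}).Reachable u a) ∧
    ∃ b ∈ X, (G.deleteEdges {s(u, v)}).Reachable v b

/-- A network is proper if every cut-edge induces a split of `X`. -/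
def ProperNet {W : Type*} (G : SimpleGraph W) (X : Set W) : Prop :=
  ∀ u v : W, IsBridgeOld G s(u, v) → InducesSplit G X u v

/-- A network is simple if every cut-edge is trivial, i.e. has a leaf endpoint. -/
def SimpleNet {W : Type*} (G : SimpleGraph W) (X : Set W) : Prop :=
  ∀ u v : W, IsBridgeOld G s(u, v) → u ∈ X ∨ v ∈ X

/-- A graph is bridgeless if it has no cut-edge. -/
def Bridgeless {W : Type*} (H : SimpleGraph W) : Prop :=
  ∀ e, ¬ IsBridgeOld H e

/-- A blob of `G`: a maximal connected subgraph without a cut-edge that is not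
a single vertex. -/
def IsBlob {W : Type*} (G : SimpleGraph W) (B : G.Subgraph) : Prop :=
  B.verts.Nontrivial ∧ B.Connected ∧ Bridgeless B.coe ∧
    ∀ B' : G.Subgraph, B'.verts.Nontrivial → B'.Connected → Bridgeless B'.coe →
      B ≤ B' → B = B'

/-- The simple network `B_N` associated to a blob `B`: the union of `B` with
all cut-edges of `G` incident to `B`. -/
def blobNet {W : Type*} (G : SimpleGraph W) (B : G.Subgraph) : G.Subgraph where
  verts := B.verts ∪ {w | ∃ u ∈ B.verts, IsBridgeOld G s(u, w)}
  Adj a b := B.Adj a b ∨ (IsBridgeOld G s(a, b) ∧ (a ∈ B.verts ∨ b ∈ B.verts))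
  adj_sub := by
    rintro v w (h | ⟨h, -⟩)
    · exact B.adj_sub h
    · exact (SimpleGraph.mem_edgeSet G).mp h.1
  edge_vert := by
    rintro v w (h | ⟨h, hv | hw⟩)
    · exact Or.inl (B.edge_vert h)
    · exact Or.inl hv
    · exact Or.inr ⟨w, hw, by rwa [Sym2.eq_swap]⟩
  symm := ⟨by
    rintro v w (h | ⟨h, hc⟩)
    · exact Or.inl (B.adj_symm h)
    · exact Or.inr ⟨by rwa [Sym2.eq_swap], hc.symm⟩⟩

/-- The leaf set of `B_N`: endpoints of incident cut-edges not lying in `B`. -/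
def blobNetLeaves {W : Type*} (G : SimpleGraph W) (B : G.Subgraph) :
    Set (blobNet G B).verts :=
  {w | (w : W) ∉ B.verts}

/-- `G` is a level-`k` network: at most `k` edges must be removed from each
blob to obtain a tree. -/
def Level {W : Type*} (G : SimpleGraph W) (k : ℕ) : Prop :=
  ∀ B : G.Subgraph, IsBlob G B → B.edgeSet.ncard ≤ B.verts.ncard - 1 + k
/-- The network `N − x`: delete leaf `x` and its incident edge and suppress the
resulting degree-2 vertex `v` (the former neighbour of `x`). -/
def suppressAdj {V : Type*} (G : SimpleGraph V) (x v : V) :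
    SimpleGraph {w : V // w ≠ x ∧ w ≠ v} where
  Adj a b := a ≠ b ∧ (G.Adj a b ∨ (G.Adj v a ∧ G.Adj v b))
  symm := ⟨by
    rintro a b ⟨h1, h2 | ⟨h3, h4⟩⟩
    · exact ⟨h1.symm, Or.inl h2.symm⟩
    · exact ⟨h1.symm, Or.inr ⟨h4, h3⟩⟩⟩
  loopless := ⟨by rintro a ⟨h1, -⟩; exact h1 rfl⟩

/-- The network `C_e(x,y)`: replace the edge `e = {u,v}` of `C` by a path
`u – w₁ – w₂ – v` and attach pendant leaves `x = Sum.inr 2` to `w₁ = Sum.inr 0`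
and `y = Sum.inr 3` to `w₂ = Sum.inr 1`. -/
def extGraph {W : Type*} (C : SimpleGraph W) (u v : W) : SimpleGraph (W ⊕ Fin 4) :=
  SimpleGraph.fromEdgeSet
    ((Sym2.map Sum.inl) '' (C.edgeSet \ {s(u, v)}) ∪
      {s(Sum.inl u, Sum.inr 0), s(Sum.inr 0, Sum.inr 1), s(Sum.inr 1, Sum.inl v),
       s(Sum.inr 0, Sum.inr 2), s(Sum.inr 1, Sum.inr 3)})

/-- The leaves `x` and `y` of `C_e(x,y)`. -/
def extLeaves (W : Type*) : Set (W ⊕ Fin 4) := {Sum.inr 2, Sum.inr 3}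

/-- The Petersen graph, realized as the Kneser graph K(5,2). -/
def petersen : SimpleGraph {s : Finset (Fin 5) // s.card = 2} where
  Adj a b := Disjoint (a : Finset (Fin 5)) (b : Finset (Fin 5))
  symm := ⟨fun a b h => h.symm⟩
  loopless := ⟨fun a h => by
    have h2 : (a : Finset (Fin 5)) = ∅ := by
      simpa using disjoint_self.mp h
    have := a.2
    rw [h2] at this
    simp at this⟩

/-- `D` is an orientation of the edges of `G`. -/
def IsOrientation {V : Type*} (G : SimpleGraph V) (D : V → V → Prop) : Prop :=
  (∀ u v, G.Adj u v ↔ (D u v ∨ D v u)) ∧ ∀ u v, ¬ (D u v ∧ D v u)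

noncomputable def outdeg {α : Type*} (r : α → α → Prop) (v : α) : ℕ := {w | r v w}.ncard
noncomputable def indeg {α : Type*} (r : α → α → Prop) (v : α) : ℕ := {w | r w v}.ncard

/-- A rooted (binary) phylogenetic network with root `ρ` and leaf set `Y`:
a DAG with a unique root of indegree 0 and outdegree 2, leaves (outdegree 0,
indegree 1) exactly `Y`, and all non-root vertices of total degree 1 or 3. -/
def IsRootedNetwork {α : Type*} (r : α → α → Prop) (ρ : α) (Y : Set α) : Prop :=
  (∀ v, ¬ Relation.TransGen r v v) ∧
  indeg r ρ = 0 ∧ outdeg r ρ = 2 ∧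
  (∀ v, indeg r v = 0 → v = ρ) ∧
  (∀ v, v ≠ ρ → indeg r v + outdeg r v = 1 ∨ indeg r v + outdeg r v = 3) ∧
  {v | outdeg r v = 0} = Y ∧ (∀ v ∈ Y, indeg r v = 1)

/-- A rooted network is tree-based if it contains a spanning arborescence
rooted at `ρ` whose leaf set is `Y`. -/
def RootedTreeBased {α : Type*} (r : α → α → Prop) (ρ : α) (Y : Set α) : Prop :=
  ∃ t : α → α → Prop, (∀ a b, t a b → r a b) ∧
    (∀ v, Relation.ReflTransGen t ρ v) ∧
    (∀ v, v ≠ ρ → indeg t v = 1) ∧ indeg t ρ = 0 ∧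
    {v | outdeg t v = 0} = Y

/-- `T` is obtained from `T'` by suppressing all degree-2 vertices, via the
embedding `f` of the vertices of `T` into those of `T'`. -/
def Suppresses {A B : Type*} (T' : SimpleGraph A) (T : SimpleGraph B) (f : B → A) : Prop :=
  Function.Injective f ∧
  (∀ a : A, deg T' a ≠ 2 → a ∈ Set.range f) ∧
  (∀ b : B, deg T' (f b) ≠ 2) ∧
  ∀ b b' : B, T.Adj b b' ↔
    ∃ p : T'.Walk (f b) (f b'), p.IsPath ∧
      ∀ a ∈ p.support, a ≠ f b → a ≠ f b' → deg T' a = 2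

/-- `G` is fully tree-based on `X`: every subtree of `G` whose leaf set is `X`
is spanning (hence a support-tree). -/
def FullyTreeBased {W : Type*} (G : SimpleGraph W) (X : Set W) : Prop :=
  ∀ H : G.Subgraph, H.Connected → H.coe.IsAcyclic →
    {v | v ∈ H.verts ∧ (H.neighborSet v).ncard ≤ 1} = X → H.IsSpanning

section AuxLemmas

variable {V : Type*} {G : SimpleGraph V}

private lemma subgraphFinite [Finite V] : Finite G.Subgraph :=
  Finite.of_injective (fun C => (C.verts, C.Adj)) (fun C D h => by
    rw [Prod.ext_iff] at h
    exact SimpleGraph.Subgraph.ext h.1 h.2)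

private lemma exists_lift_walk (C : G.Subgraph) {a b : V} (p : G.Walk a b) :
    ∀ (_ : ∀ e ∈ p.edges, e ∈ C.edgeSet) (ha : a ∈ C.verts) (hb : b ∈ C.verts),
      ∃ q : C.coe.Walk ⟨a, ha⟩ ⟨b, hb⟩, q.map C.hom = p := by
  induction p with
  | nil => exact fun _ ha hb => ⟨.nil, rfl⟩
  | @cons u c w h p ih =>
    intro hp ha hb
    have hadj : C.Adj u c := SimpleGraph.Subgraph.mem_edgeSet.mp (hp _ (by simp))
    have hc : c ∈ C.verts := C.edge_vert hadj.symm
    obtain ⟨q, hq⟩ := ih (fun e he => hp e (by simp [he])) hc hb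
    exact ⟨.cons (by exact hadj) q, by subst hq; rfl⟩

private lemma exists_lift_cycle (C : G.Subgraph) {u x y : V} (p : G.Walk u u) (hcyc : p.IsCycle)
    (hle : p.toSubgraph ≤ C) (hx : x ∈ C.verts) (hy : y ∈ C.verts) (he : s(x, y) ∈ p.edges) :
    ∃ (hu : u ∈ C.verts) (q : C.coe.Walk ⟨u, hu⟩ ⟨u, hu⟩),
      q.IsCycle ∧ s((⟨x, hx⟩ : C.verts), ⟨y, hy⟩) ∈ q.edges := by
  have hu : u ∈ C.verts := hle.1 p.start_mem_verts_toSubgraph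
  obtain ⟨q, hq⟩ := exists_lift_walk C p
    (fun e heq => SimpleGraph.Subgraph.edgeSet_mono hle (p.mem_edges_toSubgraph.mpr heq)) hu hu
  refine ⟨hu, q, ?_, ?_⟩
  · rw [← SimpleGraph.Walk.map_isCycle_iff_of_injective
      (SimpleGraph.Subgraph.hom_injective (x := C))]
    rw [hq]; exact hcyc
  · have hmem : s(x, y) ∈ (q.map C.hom).edges := by rw [hq]; exact he
    rw [SimpleGraph.Walk.edges_map, List.mem_map] at hmem
    obtain ⟨e', he', heq⟩ := hmem
    have : e' = s((⟨x, hx⟩ : C.verts), ⟨y, hy⟩) := by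
      apply Sym2.map.injective (SimpleGraph.Subgraph.hom_injective (x := C))
      rw [heq]; rfl
    rwa [← this]

private lemma bridgeless_of_cycles (C : G.Subgraph)
    (h : ∀ a b : V, C.Adj a b → ∃ u, ∃ p : G.Walk u u, p.IsCycle ∧ s(a, b) ∈ p.edges ∧
      p.toSubgraph ≤ C) : Bridgeless C.coe := by
  intro e
  induction e using Sym2.ind with
  | _ a b =>
    intro hbr
    obtain ⟨hadj, hbr⟩ := hbr
    have hall := (SimpleGraph.isBridge_iff_forall_cycle_notMem hadj).mp hbr
    obtain ⟨u, p, hcyc, he, hle⟩ := h a.1 b.1 hadj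
    obtain ⟨hu, q, hqc, hqe⟩ := exists_lift_cycle C p hcyc hle a.2 b.2 he
    exact hall q hqc hqe

private lemma exists_coe_adj {C : G.Subgraph} (hc : C.Connected) (hnt : C.verts.Nontrivial)
    (u : C.verts) : ∃ w : C.verts, C.coe.Adj u w := by
  obtain ⟨x, hx, y, hy, hxy⟩ := hnt
  obtain ⟨z, hz, hzu⟩ : ∃ z, ∃ _ : z ∈ C.verts, z ≠ (u : V) := by
    rcases eq_or_ne x (u : V) with h | h
    · exact ⟨y, hy, fun hyu => hxy (h.trans hyu.symm)⟩
    · exact ⟨x, hx, h⟩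
  obtain ⟨p⟩ := hc u ⟨z, hz⟩
  cases p with
  | nil => exact absurd rfl hzu
  | cons h q => exact ⟨_, h⟩

private lemma degree_eq_ncard {W : Type*} (g : SimpleGraph W) (v : W)
    {i : Fintype (g.neighborSet v)} : @SimpleGraph.degree W g v i = (g.neighborSet v).ncard := by
  have h1 : (g.neighborSet v).ncard = Nat.card (g.neighborSet v) :=
    (Nat.card_coe_set_eq _).symm
  rw [h1, @Nat.card_eq_fintype_card _ i]
  exact (@SimpleGraph.card_neighborSet_eq_degree _ g v i).symm

private lemma edgeFinset_card_eq {W : Type*} (g : SimpleGraph W) {i : Fintype g.edgeSet} :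
    (@SimpleGraph.edgeFinset W g i).card = g.edgeSet.ncard := by
  rw [Set.ncard_eq_toFinset_card']
  exact congrArg Finset.card (by ext; simp)

private lemma two_le_degree [Finite V] {C : G.Subgraph} (hc : C.Connected) (hnt : C.verts.Nontrivial)
    (hbl : Bridgeless C.coe) (u : C.verts) :
    1 < (C.coe.neighborSet u).ncard := by
  classical
  obtain ⟨w, hw⟩ := exists_coe_adj hc hnt u
  have hbr := hbl s(u, w)
  unfold IsBridgeOld at hbr
  have hreach : (C.coe \ SimpleGraph.fromEdgeSet {s(u, w)}).Reachable u w := by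
    by_contra hcon; exact hbr ⟨hw, hcon⟩
  obtain ⟨p⟩ := hreach
  cases p with
  | nil => exact absurd rfl hw.ne
  | @cons _ w1 _ h q =>
    rw [SimpleGraph.sdiff_adj] at h
    obtain ⟨h1, h2⟩ := h
    have hne : w1 ≠ w := by
      rintro rfl
      exact h2 ((SimpleGraph.fromEdgeSet_adj _).mpr ⟨rfl, h1.ne⟩)
    rw [Set.one_lt_ncard (Set.toFinite _)]
    exact ⟨w, (C.coe.mem_neighborSet u w).mpr hw, w1, (C.coe.mem_neighborSet u w1).mpr h1,
      Ne.symm hne⟩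

private lemma exists_blob [Finite V] (B : G.Subgraph) (h1 : B.verts.Nontrivial)
    (h2 : B.Connected) (h3 : Bridgeless B.coe) :
    ∃ m : G.Subgraph, IsBlob G m ∧ B ≤ m := by
  haveI : Finite G.Subgraph := subgraphFinite
  obtain ⟨m, hm, hmax⟩ := Set.Finite.exists_maximalFor id
    {C : G.Subgraph | C.verts.Nontrivial ∧ C.Connected ∧ Bridgeless C.coe ∧ B ≤ C}
    (Set.toFinite _) ⟨B, h1, h2, h3, le_rfl⟩
  obtain ⟨hm1, hm2, hm3, hm4⟩ := hm
  exact ⟨m, ⟨hm1, hm2, hm3,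
    fun B' hnt hcn hbl hle => le_antisymm hle (hmax ⟨hnt, hcn, hbl, hm4.trans hle⟩ hle)⟩, hm4⟩

end AuxLemmas

section MainLemmas

variable {V : Type*} {G : SimpleGraph V}

private lemma deg3_adj_leaf [Fintype V] {X : Set V} (hN : IsNetwork G X) (hS : SimpleNet G X)
    (hL : Level G 1) {v : V} (hv : deg G v = 3) : ∃ x, G.Adj v x ∧ deg G x ≤ 1 := by
  classical
  by_contra hcon
  push_neg at hcon
  have hvX : v ∉ X := by
    rw [← hN.2.2]; intro hh; simp only [Set.mem_setOf_eq] at hh; omega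
  have hcyc : ∀ w, G.Adj v w → ∃ u, ∃ p : G.Walk u u, p.IsCycle ∧ s(v, w) ∈ p.edges := by
    intro w hw
    have hnb : ¬ IsBridgeOld G s(v, w) := by
      intro hbr
      rcases hS v w hbr with h | h
      · exact hvX h
      · rw [← hN.2.2] at h
        simp only [Set.mem_setOf_eq] at h
        have := hcon w hw
        omega
    replace hnb : ¬ G.IsBridge s(v, w) := fun hb => hnb ⟨G.mem_edgeSet.mpr hw, hb⟩
    rw [SimpleGraph.isBridge_iff_forall_cycle_notMem (G.mem_edgeSet.mpr hw)] at hnb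
    push_neg at hnb
    obtain ⟨u, p, hp, he⟩ := hnb
    exact ⟨u, p, hp, he⟩
  have h3 : (G.neighborSet v).ncard = 3 := hv
  rw [Set.ncard_eq_three] at h3
  obtain ⟨a, b, c, hab, hac, hbc, hset⟩ := h3
  have hva : G.Adj v a := (G.mem_neighborSet v a).mp (by rw [hset]; simp)
  have hvb : G.Adj v b := (G.mem_neighborSet v b).mp (by rw [hset]; simp)
  have hvc : G.Adj v c := (G.mem_neighborSet v c).mp (by rw [hset]; simp)
  obtain ⟨ua, pa, hpa, hea⟩ := hcyc a hva
  obtain ⟨ub, pb, hpb, heb⟩ := hcyc b hvb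
  obtain ⟨uc, pc, hpc, hec⟩ := hcyc c hvc
  have hvA : v ∈ pa.toSubgraph.verts :=
    pa.mem_verts_toSubgraph.mpr (pa.fst_mem_support_of_mem_edges hea)
  have haA : a ∈ pa.toSubgraph.verts :=
    pa.mem_verts_toSubgraph.mpr (pa.snd_mem_support_of_mem_edges hea)
  have hvB : v ∈ pb.toSubgraph.verts :=
    pb.mem_verts_toSubgraph.mpr (pb.fst_mem_support_of_mem_edges heb)
  have hbB : b ∈ pb.toSubgraph.verts :=
    pb.mem_verts_toSubgraph.mpr (pb.snd_mem_support_of_mem_edges heb)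
  have hvC : v ∈ pc.toSubgraph.verts :=
    pc.mem_verts_toSubgraph.mpr (pc.fst_mem_support_of_mem_edges hec)
  have hcC : c ∈ pc.toSubgraph.verts :=
    pc.mem_verts_toSubgraph.mpr (pc.snd_mem_support_of_mem_edges hec)
  set B : G.Subgraph := pa.toSubgraph ⊔ pb.toSubgraph ⊔ pc.toSubgraph with hB
  have hBconn : B.Connected := by
    refine SimpleGraph.Subgraph.connected_sup ?_ pc.toSubgraph_connected.preconnected ⟨v, Or.inl hvA, hvC⟩
    exact (SimpleGraph.Subgraph.connected_sup pa.toSubgraph_connected.preconnected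
      pb.toSubgraph_connected.preconnected ⟨v, hvA, hvB⟩).preconnected
  have hvBm : v ∈ B.verts := Or.inl (Or.inl hvA)
  have haBm : a ∈ B.verts := Or.inl (Or.inl haA)
  have hbBm : b ∈ B.verts := Or.inl (Or.inr hbB)
  have hcBm : c ∈ B.verts := Or.inr hcC
  have hBnt : B.verts.Nontrivial := ⟨v, hvBm, a, haBm, hva.ne⟩
  have hBAa : B.Adj v a :=
    Or.inl (Or.inl (SimpleGraph.Subgraph.mem_edgeSet.mp (pa.mem_edges_toSubgraph.mpr hea)))
  have hBAb : B.Adj v b :=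
    Or.inl (Or.inr (SimpleGraph.Subgraph.mem_edgeSet.mp (pb.mem_edges_toSubgraph.mpr heb)))
  have hBAc : B.Adj v c :=
    Or.inr (SimpleGraph.Subgraph.mem_edgeSet.mp (pc.mem_edges_toSubgraph.mpr hec))
  have hBadj : ∀ x y : V, B.Adj x y → ∃ u, ∃ p : G.Walk u u, p.IsCycle ∧ s(x, y) ∈ p.edges ∧
      p.toSubgraph ≤ B := by
    intro x y hxy
    rcases hxy with (h | h) | h
    · exact ⟨ua, pa, hpa, pa.mem_edges_toSubgraph.mp (SimpleGraph.Subgraph.mem_edgeSet.mpr h),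
        le_trans le_sup_left le_sup_left⟩
    · exact ⟨ub, pb, hpb, pb.mem_edges_toSubgraph.mp (SimpleGraph.Subgraph.mem_edgeSet.mpr h),
        le_trans le_sup_right le_sup_left⟩
    · exact ⟨uc, pc, hpc, pc.mem_edges_toSubgraph.mp (SimpleGraph.Subgraph.mem_edgeSet.mpr h),
        le_sup_right⟩
  have hBbl : Bridgeless B.coe := bridgeless_of_cycles B hBadj
  obtain ⟨m, hblob, hBm⟩ := exists_blob B hBnt hBconn hBbl
  haveI : Fintype m.verts := Fintype.ofFinite _
  haveI : DecidableRel m.coe.Adj := Classical.decRel _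
  haveI : Fintype m.coe.edgeSet := Fintype.ofFinite _
  have hvm : v ∈ m.verts := hBm.1 hvBm
  have ham : a ∈ m.verts := hBm.1 haBm
  have hbm : b ∈ m.verts := hBm.1 hbBm
  have hcm : c ∈ m.verts := hBm.1 hcBm
  have hdeg3 : 3 ≤ (m.coe.neighborSet ⟨v, hvm⟩).ncard := by
    have hsub : ({⟨a, ham⟩, ⟨b, hbm⟩, ⟨c, hcm⟩} : Set m.verts) ⊆
        m.coe.neighborSet ⟨v, hvm⟩ := by
      intro t ht
      simp only [Set.mem_insert_iff, Set.mem_singleton_iff] at ht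
      rw [SimpleGraph.mem_neighborSet]
      rcases ht with rfl | rfl | rfl
      · exact hBm.2 hBAa
      · exact hBm.2 hBAb
      · exact hBm.2 hBAc
    have hcard : ({⟨a, ham⟩, ⟨b, hbm⟩, ⟨c, hcm⟩} : Set m.verts).ncard = 3 :=
      Set.ncard_eq_three.mpr ⟨_, _, _, fun h => hab (congrArg Subtype.val h),
        fun h => hac (congrArg Subtype.val h), fun h => hbc (congrArg Subtype.val h), rfl⟩
    calc (3 : ℕ) = ({⟨a, ham⟩, ⟨b, hbm⟩, ⟨c, hcm⟩} : Set m.verts).ncard := hcard.symm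
      _ ≤ _ := Set.ncard_le_ncard hsub (Set.toFinite _)
  have hdeg2 : ∀ u : m.verts, 2 ≤ (m.coe.neighborSet u).ncard := fun u =>
    two_le_degree hblob.2.1 hblob.1 hblob.2.2.1 u
  have hn1 : 1 ≤ Fintype.card m.verts := Fintype.card_pos_iff.mpr ⟨⟨v, hvm⟩⟩
  have hsum := SimpleGraph.sum_degrees_eq_twice_card_edges m.coe
  simp only [degree_eq_ncard, edgeFinset_card_eq] at hsum
  have hlow : 2 * Fintype.card m.verts + 1 ≤
      ∑ u : m.verts, (m.coe.neighborSet u).ncard := by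
    rw [← Finset.add_sum_erase Finset.univ _ (Finset.mem_univ (⟨v, hvm⟩ : m.verts))]
    have h2 : 2 * (Fintype.card m.verts - 1) ≤
        ∑ u ∈ Finset.univ.erase (⟨v, hvm⟩ : m.verts), (m.coe.neighborSet u).ncard := by
      have := Finset.card_nsmul_le_sum (Finset.univ.erase (⟨v, hvm⟩ : m.verts))
        (fun u => (m.coe.neighborSet u).ncard) 2 (fun x _ => hdeg2 x)
      rwa [smul_eq_mul, Finset.card_erase_of_mem (Finset.mem_univ _), Finset.card_univ,
        mul_comm] at this
    omega
  have hE : m.coe.edgeSet.ncard = m.edgeSet.ncard := by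
    rw [← SimpleGraph.Subgraph.image_coe_edgeSet_coe m,
      Set.ncard_image_of_injective _ (Sym2.map.injective Subtype.val_injective)]
  have hV : m.verts.ncard = Fintype.card m.verts := by
    rw [Set.ncard_eq_toFinset_card', Set.toFinset_card]
  have hlev := hL m hblob
  omega

private lemma two_leaves [Fintype V] {X : Set V} (hN : IsNetwork G X) (hS : SimpleNet G X)
    (hL : Level G 1) {v : V} (hv : deg G v = 3) :
    ∃ x y, x ≠ y ∧ deg G x ≤ 1 ∧ deg G y ≤ 1 := by
  obtain ⟨x, hvx, hx1⟩ := deg3_adj_leaf hN hS hL hv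
  have h3 : (G.neighborSet v).ncard = 3 := hv
  rw [Set.ncard_eq_three] at h3
  obtain ⟨a, b, c, hab, hac, hbc, hset⟩ := h3
  have hmem : ∀ w, w ∈ ({a, b, c} : Set V) → G.Adj v w := fun w hw =>
    (G.mem_neighborSet v w).mp (hset ▸ hw)
  have hx : x ∈ ({a, b, c} : Set V) := hset ▸ (G.mem_neighborSet v x).mpr hvx
  simp only [Set.mem_insert_iff, Set.mem_singleton_iff] at hx
  obtain ⟨u1, u2, hu1, hu2, h1x, h2x, _⟩ :
      ∃ u1 u2, G.Adj v u1 ∧ G.Adj v u2 ∧ u1 ≠ x ∧ u2 ≠ x ∧ u1 ≠ u2 := by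
    rcases hx with rfl | rfl | rfl
    · exact ⟨b, c, hmem b (by simp), hmem c (by simp), Ne.symm hab, Ne.symm hac, hbc⟩
    · exact ⟨a, c, hmem a (by simp), hmem c (by simp), hab, Ne.symm hbc, hac⟩
    · exact ⟨a, b, hmem a (by simp), hmem b (by simp), hac, hbc, hab⟩
  by_cases h1 : deg G u1 ≤ 1
  · exact ⟨x, u1, Ne.symm h1x, hx1, h1⟩
  by_cases h2 : deg G u2 ≤ 1
  · exact ⟨x, u2, Ne.symm h2x, hx1, h2⟩
  have hu13 : deg G u1 = 3 := by
    rcases hN.2.1 u1 with h | h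
    · exact absurd h h1
    · exact h
  obtain ⟨x', hux', hx'1⟩ := deg3_adj_leaf hN hS hL hu13
  rcases eq_or_ne x' x with heq | hne
  · exfalso
    have hux : G.Adj u1 x := heq ▸ hux'
    have hlt : 1 < (G.neighborSet x).ncard := by
      rw [Set.one_lt_ncard (Set.toFinite _)]
      exact ⟨v, (G.mem_neighborSet x v).mpr hvx.symm, u1,
        (G.mem_neighborSet x u1).mpr hux.symm, hu1.ne⟩
    have hle : (G.neighborSet x).ncard ≤ 1 := hx1
    omega
  · exact ⟨x', x, hne, hx'1, hx1⟩

end MainLemmas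

/-- Every simple level-1 network is fully tree-based: every subtree with leaf
set `X` is spanning. -/
theorem stmt17 {V : Type*} [Fintype V] (G : SimpleGraph V) (X : Set V)
    (hN : IsNetwork G X) (hS : SimpleNet G X) (hL : Level G 1) :
    FullyTreeBased G X := by
  intro H hHc _ hX
  have hXsub : X ⊆ H.verts := fun x hx => by
    rw [← hX] at hx; exact hx.1
  intro v
  rcases hN.2.1 v with hd | hd
  · refine hXsub ?_
    rw [← hN.2.2]; exact hd
  · obtain ⟨x, hvx, hx1⟩ := deg3_adj_leaf hN hS hL hd
    have hxX : x ∈ X := by rw [← hN.2.2]; exact hx1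
    obtain ⟨y1, y2, hne, h1, h2⟩ := two_leaves hN hS hL hd
    obtain ⟨y, hyX, hyx⟩ : ∃ y, y ∈ X ∧ y ≠ x := by
      rcases eq_or_ne y1 x with heq | hne1
      · exact ⟨y2, by rw [← hN.2.2]; exact h2, fun e => hne (heq.trans e.symm)⟩
      · exact ⟨y1, by rw [← hN.2.2]; exact h1, hne1⟩
    have hxH : x ∈ H.verts := hXsub hxX
    have hyH : y ∈ H.verts := hXsub hyX
    have hnt : H.verts.Nontrivial := ⟨x, hxH, y, hyH, fun e => hyx e.symm⟩
    obtain ⟨w, hw⟩ := exists_coe_adj hHc hnt ⟨x, hxH⟩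
    have hGxw : G.Adj x (w : V) := H.adj_sub hw
    have hwv : (w : V) = v := by
      have hsub := (Set.ncard_le_one (Set.toFinite (G.neighborSet x))).mp hx1
      exact hsub _ ((G.mem_neighborSet x w).mpr hGxw) _ ((G.mem_neighborSet x v).mpr hvx.symm)
    exact hwv ▸ w.2
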